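/- Let n ≥ 4 be an even integer, let k be an even integer with 1 < k < n−1, set a = cos(π/n) and x_k = cos(kπ/n). Then 𝓛_k(F_a;x) > 0 for every x ∈ [−1,1], where F_a(x) := (1+a)·(T_n(x) + 2 − ((x+2)/n²)·T_n′(x)) − (1/n²)·(1−x)·(n² − T_n′(x)) and 𝓛_k(f;x) := (1 − x_k·x)·f(x_k) + (1 − x_k²)·(x − x_k)·f′(x_k). -/

import Mathlib

set_option maxHeartbeats 1000000


open Polynomial Real

/-- The `n`-th Chebyshev polynomial of the first kind, as a real polynomial. -/
noncomputable def chebT (n : ℕ) : Polynomial ℝ := Polynomial.Chebyshev.T ℝ (n : ℤ)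

/-- `F_a(x) = (1+a)(T_n(x) + 2 - ((x+2)/n²) T_n'(x)) - (1/n²)(1-x)(n² - T_n'(x))`. -/
noncomputable def F (n : ℕ) (a x : ℝ) : ℝ :=
  (1 + a) * ((chebT n).eval x + 2 - (x + 2) / (n : ℝ) ^ 2 * (derivative (chebT n)).eval x)
    - 1 / (n : ℝ) ^ 2 * (1 - x) * ((n : ℝ) ^ 2 - (derivative (chebT n)).eval x)

/-- `𝓛(c, f; x) = (1 - c x) f(c) + (1 - c²)(x - c) f'(c)`. -/
noncomputable def Lfun (c : ℝ) (f : ℝ → ℝ) (x : ℝ) : ℝ :=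
  (1 - c * x) * f c + (1 - c ^ 2) * (x - c) * deriv f c

lemma dT_cos (n : ℕ) (θ : ℝ) :
    (derivative (chebT n)).eval (Real.cos θ) * Real.sin θ = (n : ℝ) * Real.sin (n * θ) := by
  rw [chebT, Polynomial.Chebyshev.T_derivative_eq_U]
  have h := Polynomial.Chebyshev.U_real_cos θ ((n : ℤ) - 1)
  push_cast at h
  rw [eval_mul, mul_assoc]
  norm_num at h ⊢

noncomputable def Qp (n : ℕ) (a : ℝ) : Polynomial ℝ :=
  C (1 + a) * (chebT n + C 2 - C (((n : ℝ) ^ 2)⁻¹) * (X + C 2) * derivative (chebT n))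
    - C (((n : ℝ) ^ 2)⁻¹) * (C 1 - X) * (C ((n : ℝ) ^ 2) - derivative (chebT n))

lemma F_eq_Q (n : ℕ) (a : ℝ) : F n a = fun x => (Qp n a).eval x := by
  funext x
  simp only [F, Qp, eval_sub, eval_add, eval_mul, eval_C, eval_X, div_eq_mul_inv, one_mul]
  ring

/-- For even `n ≥ 4`, even `k` with `1 < k < n-1` and `a = cos(π/n)`,
`𝓛_k(F_a;x) > 0` on `[-1,1]`. -/
theorem L_of_F_pos_even_k (n : ℕ) (hn : 4 ≤ n) (hne : Even n) (k : ℕ) (hke : Even k)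
    (hk1 : 1 < k) (hk2 : k < n - 1) (a : ℝ) (ha : a = Real.cos (π / n))
    (x : ℝ) (hx : x ∈ Set.Icc (-1 : ℝ) 1) :
    0 < Lfun (Real.cos (k * π / n)) (F n a) x := by
  obtain ⟨hx1, hx2⟩ := hx
  have hnpos : (0 : ℝ) < n := by positivity
  have hn2 : ((n : ℝ) ^ 2) ≠ 0 := by positivity
  have hπn : 0 < π / n := div_pos Real.pi_pos hnpos
  set θ : ℝ := ↑k * π / n with hθ
  set c : ℝ := Real.cos θ with hc
  have hkn2 : k + 2 ≤ n := by omega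
  have hkn2' : (k : ℝ) + 2 ≤ n := by exact_mod_cast hkn2
  have hk1' : (1 : ℝ) < k := by exact_mod_cast hk1
  have hn4 : (4 : ℝ) ≤ n := by exact_mod_cast hn
  have hθlb : π / n < θ := by
    rw [hθ, div_lt_div_iff_of_pos_right hnpos]
    nlinarith [Real.pi_pos]
  have hθub : θ < π - π / n := by
    rw [hθ, show π - π / (n:ℝ) = ((n:ℝ) - 1) * π / n by field_simp,
      div_lt_div_iff_of_pos_right hnpos]
    nlinarith [Real.pi_pos]
  have hθ0 : 0 < θ := hπn.trans hθlb
  have hθπ : θ < π := by linarith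
  have hsin : 0 < Real.sin θ := Real.sin_pos_of_pos_of_lt_pi hθ0 hθπ
  have hca : c < a := by
    rw [ha, hc]
    exact Real.cos_lt_cos_of_nonneg_of_le_pi hπn.le hθπ.le hθlb
  have hac : -a < c := by
    rw [ha, hc]
    have h := Real.cos_lt_cos_of_nonneg_of_le_pi hθ0.le (by linarith : π - π / n ≤ π) hθub
    rwa [Real.cos_pi_sub] at h
  have ha1 : a < 1 := by
    rw [ha]
    have h := Real.cos_lt_cos_of_nonneg_of_le_pi (le_refl 0) (by linarith : π / (n:ℝ) ≤ π) hπn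
    rwa [Real.cos_zero] at h
  have ha0 : 0 < a := by
    rw [ha]
    apply Real.cos_pos_of_mem_Ioo
    have h4 : π / (n:ℝ) ≤ π / 4 := by gcongr
    exact ⟨by linarith, by linarith [Real.pi_pos]⟩
  have hc1 : -1 < c := by linarith
  have hc2 : c < 1 := by linarith
  -- n * θ = k * π
  have hnθ : (n : ℝ) * θ = k * π := by
    rw [hθ]; field_simp
  have hcos1 : Real.cos ((n : ℝ) * θ) = 1 := by
    obtain ⟨m, hm⟩ := hke
    rw [hnθ, hm, show ((m + m : ℕ) : ℝ) * π = m * (2 * π) by push_cast; ring]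
    exact Real.cos_nat_mul_two_pi m
  have hsin0 : Real.sin ((n : ℝ) * θ) = 0 := by
    rw [hnθ]; exact Real.sin_nat_mul_pi k
  -- T_n(c) = 1
  have h1 : (chebT n).eval c = 1 := by
    rw [hc, chebT]
    have := Polynomial.Chebyshev.T_real_cos θ (n : ℤ)
    push_cast at this
    rw [this, hcos1]
  -- T_n'(c) = 0
  have h2 : (derivative (chebT n)).eval c = 0 := by
    have h := dT_cos n θ
    rw [hsin0, mul_zero] at h
    exact (mul_eq_zero.mp h).resolve_right hsin.ne'
  -- T_n''(c) * (1 - c²) = -n²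
  have hpp : (derivative (derivative (chebT n))).eval c * (1 - c ^ 2) = -(n : ℝ) ^ 2 := by
    have hdf : HasDerivAt (fun t => (derivative (chebT n)).eval (Real.cos t) * Real.sin t)
        ((derivative (derivative (chebT n))).eval (Real.cos θ) * (-Real.sin θ) * Real.sin θ
          + (derivative (chebT n)).eval (Real.cos θ) * Real.cos θ) θ :=
      ((((derivative (chebT n)).hasDerivAt (Real.cos θ)).comp θ (Real.hasDerivAt_cos θ))).mul
        (Real.hasDerivAt_sin θ)
    have hdg : HasDerivAt (fun t => (n : ℝ) * Real.sin ((n : ℝ) * t))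
        ((n : ℝ) * (Real.cos ((n : ℝ) * θ) * ((n : ℝ) * 1))) θ :=
      ((Real.hasDerivAt_sin ((n : ℝ) * θ)).comp θ ((hasDerivAt_id θ).const_mul (n : ℝ))).const_mul
        (n : ℝ)
    have hfg : (fun t => (derivative (chebT n)).eval (Real.cos t) * Real.sin t)
        = fun t => (n : ℝ) * Real.sin ((n : ℝ) * t) := funext (dT_cos n)
    rw [hfg] at hdf
    have heq := hdf.unique hdg
    rw [← hc, h2, hcos1] at heq
    have hs2 : Real.sin θ ^ 2 = 1 - c ^ 2 := by rw [Real.sin_sq, hc]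
    linear_combination (-1 : ℝ) * heq
      - (derivative (derivative (chebT n))).eval c * hs2
  -- value of F at c
  have hFc : F n a c = 2 + 3 * a + c := by
    rw [F, h1, h2]
    field_simp
    ring
  -- (1 - c²) * F'(c)
  have hD : (1 - c ^ 2) * deriv (F n a) c = (1 + a) * (c + 2) + c - c ^ 2 := by
    rw [F_eq_Q, Polynomial.deriv]
    simp only [Qp, derivative_sub, derivative_mul, derivative_add, derivative_C, derivative_X,
      eval_sub, eval_add, eval_mul, eval_C, eval_X, zero_mul, mul_zero, zero_add, add_zero,
      mul_one, one_mul, zero_sub, sub_zero, eval_zero, eval_neg, eval_one]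
    rw [h2]
    field_simp
    linear_combination ((1 - c) - (1 + a) * (c + 2)) * hpp
  have hL : Lfun c (F n a) x
      = (1 - c * x) * (2 + 3 * a + c) + (x - c) * ((1 + a) * (c + 2) + c - c ^ 2) := by
    simp only [Lfun]
    rw [hFc]
    linear_combination (x - c) * hD
  rw [hL]
  have hA : 0 < (1 - c) * ((1 + a) * (c + 5) - (1 - c) ^ 2) := by nlinarith
  have hB : 0 < (1 - c ^ 2) * (a - c) := mul_pos (by nlinarith) (by linarith)
  rcases le_or_gt x 0 with h | h
  · nlinarith [mul_nonneg (by linarith : (0:ℝ) ≤ 1 + x) hA.le,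
      mul_nonneg (by linarith : (0:ℝ) ≤ -x) hB.le, hB]
  · nlinarith [mul_nonneg (by linarith : (0:ℝ) ≤ 1 - x) hB.le,
      mul_nonneg (by linarith : (0:ℝ) ≤ x) hA.le, hA]
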